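/- For the sequence defined by the recurrence x_{n+3} x_n = x_{n+2} x_{n+1} + a(x_{n+1} + x_{n+2}) (the k=1 Heideman–Hogan recurrence) with nonzero initial values x_0, x_1, x_2 and nonzero parameter a, the quantity K = 1 + x_0/x_2 + x_2/x_0 + a((1 + x_2/x_0)(x_0+x_1)/(x_1 x_2) + (1 + x_0/x_2)(x_1+x_2)/(x_0 x_1)) + a^2(1/(x_1 x_2) + (1/x_0)(1/x_1 + 1/x_2)) is a conserved quantity: it takes the same value when computed from (x_1, x_2, x_3) as from (x_0, x_1, x_2). -/
import Mathlib


/-- The conserved quantity `K` for the k=1 Heideman–Hogan recurrence,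
computed from three consecutive terms `x0, x1, x2` and the parameter `a`. -/
def heihoK {F : Type*} [Field F] (a x0 x1 x2 : F) : F :=
  1 + x0 / x2 + x2 / x0
    + a * ((1 + x2 / x0) * (x0 + x1) / (x1 * x2)
        + (1 + x0 / x2) * (x1 + x2) / (x0 * x1))
    + a ^ 2 * (1 / (x1 * x2) + (1 / x0) * (1 / x1 + 1 / x2))

theorem heihoK_conserved {F : Type*} [Field F] (a : F) (ha : a ≠ 0)
    (x : ℤ → F) (hnz : ∀ n, x n ≠ 0)
    (hrec : ∀ n : ℤ, x (n + 3) * x n = x (n + 2) * x (n + 1) + a * (x (n + 1) + x (n + 2))) :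
    heihoK a (x 1) (x 2) (x 3) = heihoK a (x 0) (x 1) (x 2) := by
  have h := hrec 0
  norm_num at h
  have key : ∀ A B C D : F, A ≠ 0 → B ≠ 0 → C ≠ 0 → D ≠ 0 →
      D * A = C * B + a * (B + C) →
      heihoK a B C D = heihoK a A B C := by
    intro A B C D hA hB hC hD hh
    have iA : A * A⁻¹ = 1 := mul_inv_cancel₀ hA
    have iB : B * B⁻¹ = 1 := mul_inv_cancel₀ hB
    have iC : C * C⁻¹ = 1 := mul_inv_cancel₀ hC
    have iD : D * D⁻¹ = 1 := mul_inv_cancel₀ hD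
    unfold heihoK
    linear_combination ((C*D - A*B + a*(D - A)) * (A⁻¹*B⁻¹*C⁻¹*D⁻¹)) * hh
      + ((-1)*C*D^2*B⁻¹*C⁻¹*D⁻¹ + (-1)*B^2*C*B⁻¹*C⁻¹*D⁻¹ + A*B*D*B⁻¹*C⁻¹*D⁻¹ + (-1)*a*D^2*B⁻¹*C⁻¹*D⁻¹ + (-2)*a*C*B⁻¹*C⁻¹ + (-1)*a*B*B⁻¹*C⁻¹ + (-2)*a*B*C*B⁻¹*C⁻¹*D⁻¹ + (-1)*a*B^2*B⁻¹*C⁻¹*D⁻¹ + a*A*D*B⁻¹*C⁻¹*D⁻¹ + (-1)*a^2*C*B⁻¹*C⁻¹*D⁻¹ + (-1)*a^2*B*B⁻¹*C⁻¹*D⁻¹) * iA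
      + (C^2*D*A⁻¹*C⁻¹*D⁻¹ + (-1)*B*C*C⁻¹*D⁻¹ + A*D*C⁻¹*D⁻¹ + (-2)*a*C⁻¹ + (-1)*a*A⁻¹ + (2)*a*D*C⁻¹*D⁻¹ + (-1)*a*C*C⁻¹*D⁻¹ + (-1)*a*C*A⁻¹*C⁻¹ + (2)*a*C*D*A⁻¹*C⁻¹*D⁻¹ + (-1)*a*B*C⁻¹*D⁻¹ + (-1)*a^2*C⁻¹*D⁻¹ + a^2*D*A⁻¹*C⁻¹*D⁻¹) * iB
      + ((-1)*D^2*B⁻¹*D⁻¹ + C*D*A⁻¹*D⁻¹ + (-1)*B*D⁻¹ + (-1)*a*B⁻¹ + (-1)*a*A⁻¹ + a*D*B⁻¹*D⁻¹ + (2)*a*D*A⁻¹*D⁻¹ + a*C*D*A⁻¹*B⁻¹*D⁻¹ + (-1)*a^2*B⁻¹*D⁻¹ + a^2*D*A⁻¹*B⁻¹*D⁻¹) * iC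
      + ((-1)*D*B⁻¹ + C*A⁻¹ + A*C⁻¹ + (2)*a*C⁻¹ + a*B⁻¹ + (2)*a*A⁻¹ + (-1)*a*D*B⁻¹*C⁻¹ + a*C*A⁻¹*B⁻¹ + a*A*B⁻¹*C⁻¹ + a^2*A⁻¹*C⁻¹ + a^2*A⁻¹*B⁻¹) * iD
  exact key (x 0) (x 1) (x 2) (x 3) (hnz 0) (hnz 1) (hnz 2) (hnz 3) h
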